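/- Newton–Leibniz formula (forward direction): Let Q be an interval of ℝ and suppose f is the derivative of F on Q, i.e., f is a control function of F on Q and every function G having f as a control function on Q satisfies G = F + C on Q for some constant C. Then any integral system R of f on Q satisfies R(u, v) = F(v) − F(u) for all u, v ∈ Q. -/
import Mathlib


/-- `f` is a difference-quotient control function of `F` on the set `S`. -/
def IsControl (f F : ℝ → ℝ) (S : Set ℝ) : Prop :=
  ∀ u ∈ S, ∀ v ∈ S, u < v →
    ∃ p ∈ Set.Icc u v ∩ S, ∃ q ∈ Set.Icc u v ∩ S,
      f p ≤ (F v - F u) / (v - u) ∧ (F v - F u) / (v - u) ≤ f q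

/-- `S` is an integral system of `f` on the interval `Q`. -/
def IsIntegralSystem (f : ℝ → ℝ) (S : ℝ → ℝ → ℝ) (Q : Set ℝ) : Prop :=
  (∀ u ∈ Q, ∀ v ∈ Q, ∀ w ∈ Q, S u v + S v w = S u w) ∧
  (∀ u ∈ Q, ∀ v ∈ Q, u < v →
    ∃ p ∈ Set.Icc u v, ∃ q ∈ Set.Icc u v,
      f p * (v - u) ≤ S u v ∧ S u v ≤ f q * (v - u))

theorem newton_leibniz_forward (Q : Set ℝ) (hQ : Q.OrdConnected)
    (f F : ℝ → ℝ) (hctrl : IsControl f F Q)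
    (hderiv : ∀ G : ℝ → ℝ, IsControl f G Q → ∃ C : ℝ, ∀ x ∈ Q, G x = F x + C) :
    ∀ R : ℝ → ℝ → ℝ, IsIntegralSystem f R Q →
      ∀ u ∈ Q, ∀ v ∈ Q, R u v = F v - F u := by
  intro R hR u hu v hv
  obtain ⟨hadd, hbnd⟩ := hR
  -- We have u ∈ Q, so Q is nonempty; take a := u as base point is fine since we
  -- only need the conclusion for this particular u, v.
  set a := u with ha
  have hG : IsControl f (fun x => R a x) Q := by
    intro s hs t ht hst
    obtain ⟨p, hp, q, hq, h1, h2⟩ := hbnd s hs t ht hst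
    have hpos : (0:ℝ) < t - s := by linarith
    have key : R a t - R a s = R s t := by
      have := hadd a hu s hs t ht
      linarith
    refine ⟨p, ⟨hp, hQ.out hs ht hp⟩, q, ⟨hq, hQ.out hs ht hq⟩, ?_, ?_⟩
    · rw [key, le_div_iff₀ hpos]; linarith
    · rw [key, div_le_iff₀ hpos]; linarith
  obtain ⟨C, hC⟩ := hderiv _ hG
  have h1 := hC u hu
  have h2 := hC v hv
  have := hadd a hu u hu v hv
  have huu : R u u = 0 := by
    have := hadd u hu u hu u hu; linarith
  simp only [ha] at *
  linarith
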